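/- Let n ≥ 1 and let c : Fin n × Fin n → ℝ be an arbitrary cost function. Then there exists a permutation σ of Fin n such that the coupling γ defined by γ(i,j) = 1/n if j = σ(i) and γ(i,j) = 0 otherwise satisfies: for every coupling γ' of the uniform measures (i.e., every matrix γ' : Fin n → Fin n → ℝ with γ'(i,j) ≥ 0 for all i,j, ∑_j γ'(i,j) = 1/n for every i, and ∑_i γ'(i,j) = 1/n for every j), one has ∑_{i,j} c(i,j) γ(i,j) ≤ ∑_{i,j} c(i,j) γ'(i,j). In other words, the discrete Kantorovich problem between two uniform measures on n points has a solution induced by a bijection, hence also solving the Monge problem. -/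

import Mathlib

/-- The discrete Kantorovich problem between two uniform measures on `n` points
has a solution induced by a bijection (a permutation), hence also solving the
Monge problem. -/
theorem kantorovich_uniform_square_has_permutation_solution
    (n : ℕ) (hn : 1 ≤ n) (c : Fin n × Fin n → ℝ) :
    ∃ σ : Equiv.Perm (Fin n),
      ∀ γ' : Fin n → Fin n → ℝ,
        (∀ i j, 0 ≤ γ' i j) →
        (∀ i, ∑ j, γ' i j = 1 / n) →
        (∀ j, ∑ i, γ' i j = 1 / n) →
        ∑ i, ∑ j, c (i, j) * (if j = σ i then (1 : ℝ) / n else 0) ≤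
          ∑ i, ∑ j, c (i, j) * γ' i j := by
  have hn0 : (n : ℝ) ≠ 0 := by positivity
  obtain ⟨σ, -, hσ⟩ := Finset.exists_min_image Finset.univ
    (fun σ : Equiv.Perm (Fin n) => ∑ i, c (i, σ i)) ⟨1, Finset.mem_univ 1⟩
  refine ⟨σ, fun γ' hpos hrow hcol => ?_⟩
  set M : Matrix (Fin n) (Fin n) ℝ := fun i j => n * γ' i j with hMdef
  have hM : M ∈ doublyStochastic ℝ (Fin n) := by
    rw [mem_doublyStochastic_iff_sum]
    refine ⟨fun i j => mul_nonneg (Nat.cast_nonneg n) (hpos i j), fun i => ?_, fun j => ?_⟩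
    · rw [hMdef]; rw [← Finset.mul_sum, hrow]; field_simp
    · rw [hMdef]; rw [← Finset.mul_sum, hcol]; field_simp
  obtain ⟨w, hw0, hw1, hwM⟩ := exists_eq_sum_perm_of_mem_doublyStochastic hM
  have key : ∑ i, c (i, σ i) ≤ ∑ i, ∑ j, c (i, j) * M i j := by
    have hdecomp : ∑ i, ∑ j, c (i, j) * M i j
        = ∑ τ : Equiv.Perm (Fin n), w τ * ∑ i, c (i, τ i) := by
      calc ∑ i, ∑ j, c (i, j) * M i j
          = ∑ i, ∑ j, ∑ τ : Equiv.Perm (Fin n),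
              c (i, j) * (w τ * (if τ i = j then 1 else 0)) := by
            refine Finset.sum_congr rfl fun i _ => Finset.sum_congr rfl fun j _ => ?_
            rw [← hwM]
            simp [Matrix.sum_apply, Equiv.Perm.permMatrix, PEquiv.toMatrix_apply,
              Equiv.toPEquiv_apply, Finset.mul_sum]
        _ = ∑ τ : Equiv.Perm (Fin n), ∑ i, ∑ j,
              c (i, j) * (w τ * (if τ i = j then 1 else 0)) := by
            rw [Finset.sum_congr rfl fun (i : Fin n) _ =>
              (Finset.sum_comm (s := Finset.univ) (t := Finset.univ)
                (f := fun (j : Fin n) (τ : Equiv.Perm (Fin n)) =>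
                  c (i, j) * (w τ * (if τ i = j then 1 else 0))))]
            exact Finset.sum_comm (s := Finset.univ) (t := Finset.univ)
              (f := fun (i : Fin n) (τ : Equiv.Perm (Fin n)) =>
                ∑ j, c (i, j) * (w τ * (if τ i = j then 1 else 0)))
        _ = ∑ τ : Equiv.Perm (Fin n), w τ * ∑ i, c (i, τ i) := by
            refine Finset.sum_congr rfl fun τ _ => ?_
            rw [Finset.mul_sum]
            refine Finset.sum_congr rfl fun i _ => ?_
            rw [Finset.sum_eq_single (τ i)] <;> simp +contextual [eq_comm, mul_comm]
    rw [hdecomp]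
    calc ∑ i, c (i, σ i) = ∑ τ : Equiv.Perm (Fin n), w τ * ∑ i, c (i, σ i) := by
          rw [← Finset.sum_mul, hw1, one_mul]
      _ ≤ ∑ τ : Equiv.Perm (Fin n), w τ * ∑ i, c (i, τ i) := by
          apply Finset.sum_le_sum
          intro τ _
          exact mul_le_mul_of_nonneg_left (hσ τ (Finset.mem_univ τ)) (hw0 τ)
  have hL : ∑ i, ∑ j, c (i, j) * (if j = σ i then (1 : ℝ) / n else 0)
      = (1 / n) * ∑ i, c (i, σ i) := by
    rw [Finset.mul_sum]
    refine Finset.sum_congr rfl fun i _ => ?_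
    rw [Finset.sum_eq_single (σ i)] <;> simp +contextual [mul_comm]
  have hR : ∑ i, ∑ j, c (i, j) * γ' i j = (1 / n) * ∑ i, ∑ j, c (i, j) * M i j := by
    rw [Finset.mul_sum]
    refine Finset.sum_congr rfl fun i _ => ?_
    rw [Finset.mul_sum]
    refine Finset.sum_congr rfl fun j _ => ?_
    rw [hMdef]
    field_simp
  rw [hL, hR]
  apply mul_le_mul_of_nonneg_left key
  positivity
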